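/- Let G be a graph whose degrees all satisfy |d(u) - n/2| ≤ εn, where n is the number of vertices. Then for every vertex v, |e(N(v)) - e(M(v))| ≤ Cεn², for an absolute constant C, where M(v) is the complement of N(v) ∪ {v} together with v (i.e., the non-neighbors of v including v itself). -/

import Mathlib

open Finset SimpleGraph

variable {V : Type} [Fintype V] [DecidableEq V]

lemma count_eq (G : SimpleGraph V) [DecidableRel G.Adj] (S T : Finset V) :
    ((S ×ˢ T).filter fun p => G.Adj p.1 p.2).card
      = ∑ x ∈ S, (T.filter (G.Adj x)).card := by
  simp only [Finset.card_filter]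
  rw [Finset.sum_product]

lemma swap_eq (G : SimpleGraph V) [DecidableRel G.Adj] (S T : Finset V) :
    ((S ×ˢ T).filter fun p => G.Adj p.1 p.2).card
      = ((T ×ˢ S).filter fun p => G.Adj p.1 p.2).card := by
  apply Finset.card_nbij' Prod.swap Prod.swap
  · intro p hp
    simp only [Finset.mem_coe, mem_filter, mem_product] at hp ⊢
    exact ⟨⟨hp.1.2, hp.1.1⟩, hp.2.symm⟩
  · intro p hp
    simp only [Finset.mem_coe, mem_filter, mem_product] at hp ⊢
    exact ⟨⟨hp.1.2, hp.1.1⟩, hp.2.symm⟩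
  · intro p _; simp
  · intro p _; simp

lemma double_count (G : SimpleGraph V) [DecidableRel G.Adj] (S : Finset V) :
    ((S ×ˢ S).filter fun p => G.Adj p.1 p.2).card
      = 2 * (G.edgeFinset ∩ S.sym2).card := by
  rw [Finset.card_eq_sum_card_fiberwise
    (f := fun p : V × V => Sym2.mk p.1 p.2) (t := G.edgeFinset ∩ S.sym2) ?_]
  · rw [Finset.sum_congr rfl (g := fun _ => 2) ?_, Finset.sum_const, smul_eq_mul, mul_comm]
    intro e he
    simp only [mem_inter, mem_edgeFinset, mem_edgeSet] at he
    induction e with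
    | _ a b =>
      obtain ⟨hab, hS⟩ := he
      rw [Finset.mk_mem_sym2_iff] at hS
      have : ((S ×ˢ S).filter fun p => G.Adj p.1 p.2).filter
          (fun p => Sym2.mk p.1 p.2 = s(a, b)) = {(a, b), (b, a)} := by
        ext ⟨x, y⟩
        simp only [mem_filter, mem_product, mem_insert, mem_singleton, Sym2.eq_iff,
          Prod.swap_prod_mk, Prod.mk.injEq]
        constructor
        · rintro ⟨_, (⟨rfl, rfl⟩ | ⟨rfl, rfl⟩)⟩
          · left; exact ⟨rfl, rfl⟩
          · right; exact ⟨rfl, rfl⟩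
        · rintro (⟨rfl, rfl⟩ | ⟨rfl, rfl⟩)
          · exact ⟨⟨⟨hS.1, hS.2⟩, hab⟩, Or.inl ⟨rfl, rfl⟩⟩
          · exact ⟨⟨⟨hS.2, hS.1⟩, hab.symm⟩, Or.inr ⟨rfl, rfl⟩⟩
      rw [this]
      rw [Finset.card_insert_of_notMem, Finset.card_singleton]
      simp only [mem_singleton, Prod.mk.injEq, not_and]
      intro h; exact absurd h hab.ne
  · rintro ⟨x, y⟩ hp
    simp only [Finset.mem_coe, mem_filter, mem_product] at hp
    simp only [Finset.mem_coe, mem_inter, mem_edgeFinset, mem_edgeSet, Finset.mk_mem_sym2_iff]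
    exact ⟨hp.2, hp.1.1, hp.1.2⟩

lemma main_identity (G : SimpleGraph V) [DecidableRel G.Adj] (S : Finset V) :
    ∑ x ∈ S, G.degree x + 2 * (G.edgeFinset ∩ Sᶜ.sym2).card
      = ∑ x ∈ Sᶜ, G.degree x + 2 * (G.edgeFinset ∩ S.sym2).card := by
  have hdeg : ∀ T : Finset V, ∑ x ∈ T, G.degree x
      = ∑ x ∈ T, (T.filter (G.Adj x)).card + ∑ x ∈ T, (Tᶜ.filter (G.Adj x)).card := by
    intro T
    rw [← Finset.sum_add_distrib]
    refine Finset.sum_congr rfl fun x _ => ?_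
    rw [degree, neighborFinset_def]
    rw [← Finset.card_union_of_disjoint (Finset.disjoint_filter_filter
      (disjoint_compl_right))]
    rw [← Finset.filter_union, Finset.union_compl]
    congr 1
    ext y; simp [adj_comm]
  have h1 := hdeg S
  have h2 := hdeg Sᶜ
  rw [compl_compl] at h2
  have hcross : ∑ x ∈ S, (Sᶜ.filter (G.Adj x)).card
      = ∑ x ∈ Sᶜ, (S.filter (G.Adj x)).card := by
    rw [← count_eq, ← count_eq, swap_eq]
  have e1 : ∑ x ∈ S, (S.filter (G.Adj x)).card = 2 * (G.edgeFinset ∩ S.sym2).card := by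
    rw [← count_eq, double_count]
  have e2 : ∑ x ∈ Sᶜ, (Sᶜ.filter (G.Adj x)).card = 2 * (G.edgeFinset ∩ Sᶜ.sym2).card := by
    rw [← count_eq, double_count]
  omega

lemma abs_sum_sub_le {α : Type*} (T : Finset α) (f : α → ℝ) (c B : ℝ)
    (h : ∀ x ∈ T, |f x - c| ≤ B) :
    |∑ x ∈ T, f x - T.card * c| ≤ T.card * B := by
  have heq : ∑ x ∈ T, f x - T.card * c = ∑ x ∈ T, (f x - c) := by
    rw [Finset.sum_sub_distrib, Finset.sum_const, nsmul_eq_mul]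
  rw [heq]
  calc |∑ x ∈ T, (f x - c)| ≤ ∑ x ∈ T, |f x - c| := Finset.abs_sum_le_sum_abs _ _
    _ ≤ ∑ x ∈ T, B := Finset.sum_le_sum h
    _ = T.card * B := by rw [Finset.sum_const, nsmul_eq_mul]

theorem edges_neighborhood_balance :
    ∃ C : ℝ, 0 < C ∧
      ∀ (V : Type) [Fintype V] [DecidableEq V] (G : SimpleGraph V) [DecidableRel G.Adj]
        (n : ℕ) (ε : ℝ), Fintype.card V = n →
        (∀ u : V, |(G.degree u : ℝ) - n / 2| ≤ ε * n) →
        ∀ v : V,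
          |((G.edgeFinset ∩ (G.neighborFinset v).sym2).card : ℝ)
            - ((G.edgeFinset ∩ ((G.neighborFinset v)ᶜ).sym2).card : ℝ)|
            ≤ C * ε * n ^ 2 := by
  refine ⟨1, one_pos, ?_⟩
  intro V _ _ G _ n ε hn hdeg v
  set N := G.neighborFinset v with hNdef
  have key := main_identity G N
  have hNcard : N.card = G.degree v := G.card_neighborFinset_eq_degree v
  have hMc : N.card + Nᶜ.card = n := by
    rw [Finset.card_add_card_compl, hn]
  have hε : 0 ≤ ε * n := le_trans (abs_nonneg _) (hdeg v)
  set a : ℝ := ((G.edgeFinset ∩ N.sym2).card : ℝ) with ha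
  set b : ℝ := ((G.edgeFinset ∩ Nᶜ.sym2).card : ℝ) with hb
  set DN : ℝ := ((∑ x ∈ N, G.degree x : ℕ) : ℝ) with hDN
  set DM : ℝ := ((∑ x ∈ Nᶜ, G.degree x : ℕ) : ℝ) with hDM
  have keyR : DN + 2 * b = DM + 2 * a := by
    rw [hDN, hDM, ha, hb]
    exact_mod_cast congrArg (Nat.cast : ℕ → ℝ) key
  have hDNs : DN = ∑ x ∈ N, ((G.degree x : ℝ)) := by rw [hDN]; push_cast; ring
  have hDMs : DM = ∑ x ∈ Nᶜ, ((G.degree x : ℝ)) := by rw [hDM]; push_cast; ring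
  have hNb := abs_sum_sub_le N (fun x => (G.degree x : ℝ)) ((n : ℝ) / 2) (ε * n)
    (fun x _ => hdeg x)
  have hMb := abs_sum_sub_le Nᶜ (fun x => (G.degree x : ℝ)) ((n : ℝ) / 2) (ε * n)
    (fun x _ => hdeg x)
  rw [← hDNs] at hNb
  rw [← hDMs] at hMb
  set dN : ℝ := (N.card : ℝ) with hdN
  set dM : ℝ := ((Nᶜ).card : ℝ) with hdM
  have hsum : dN + dM = n := by rw [hdN, hdM]; exact_mod_cast hMc
  have hdv : |dN - (n : ℝ) / 2| ≤ ε * n := by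
    rw [hdN, hNcard]; exact hdeg v
  have hprod : dN * (ε * n) + dM * (ε * n) = n * (ε * n) := by
    rw [← add_mul, hsum]
  have hn0 : (0 : ℝ) ≤ n := Nat.cast_nonneg n
  have h2 : |(dN - (n : ℝ) / 2) * n| ≤ (ε * n) * n := by
    rw [abs_mul, abs_of_nonneg hn0]
    exact mul_le_mul_of_nonneg_right hdv hn0
  rw [abs_le] at hNb hMb h2 ⊢
  obtain ⟨hNb1, hNb2⟩ := hNb
  obtain ⟨hMb1, hMb2⟩ := hMb
  obtain ⟨h21, h22⟩ := h2
  constructor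
  · nlinarith [keyR, hprod, hsum]
  · nlinarith [keyR, hprod, hsum]
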